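/- Under the hypotheses of the previous pole-expansion system, if α q̇ + 2β = 0, α̇ + αv + 2γ = 0, and β̇ + vβ − γ q̇ + αw = 0 hold with α nowhere zero, then q̈ = 2w. -/

import Mathlib

/-- From the pole-expansion system `αq̇ + 2β = 0`, `α̇ + αv + 2γ = 0`,
`β̇ + vβ − γq̇ + αw = 0` with `α` nowhere zero, one deduces `q̈ = 2w`. -/
theorem stmt_1
    (q v w α β γ : ℝ → ℂ)
    (hq : Differentiable ℝ q) (hq' : Differentiable ℝ (deriv q))
    (hα : Differentiable ℝ α) (hβ : Differentiable ℝ β)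
    (hα0 : ∀ t, α t ≠ 0)
    (h1 : ∀ t, α t * deriv q t + 2 * β t = 0)
    (h2 : ∀ t, deriv α t + α t * v t + 2 * γ t = 0)
    (h3 : ∀ t, deriv β t + v t * β t - γ t * deriv q t + α t * w t = 0) :
    ∀ t, deriv (deriv q) t = 2 * w t := by
  intro t
  have hzero : (fun s => α s * deriv q s + 2 * β s) = fun _ => (0 : ℂ) := funext h1
  have hd : deriv (fun s => α s * deriv q s + 2 * β s) t = 0 := by
    rw [hzero]; simp
  have hcalc : deriv (fun s => α s * deriv q s + 2 * β s) t
      = deriv α t * deriv q t + α t * deriv (deriv q) t + 2 * deriv β t := by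
    rw [deriv_fun_add (f := fun s => α s * deriv q s) ((hα t).mul (hq' t)) ((hβ t).const_mul 2),
      deriv_fun_mul (hα t) (hq' t), deriv_const_mul 2 (hβ t)]
  rw [hcalc] at hd
  have h1t := h1 t
  have h2t := h2 t
  have h3t := h3 t
  refine mul_left_cancel₀ (hα0 t) ?_
  linear_combination hd - deriv q t * h2t - 2 * h3t + v t * h1t
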